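/- The clique number of the (k,t)-tower T_{k,t} equals k-2, for k ≥ 4 and t ≥ 1. -/

import Mathlib

/-- Valid vertices of the `(k,t)`-tower: the base `V₀ = {(0,0),(0,1)}` and
levels `V_i = {(i,j) : j ≤ k-2}` for `1 ≤ i ≤ t`. -/
def towerValid (k t : ℕ) (p : ℕ × ℕ) : Prop :=
  (p.1 = 0 ∧ p.2 < 2) ∨ (1 ≤ p.1 ∧ p.1 ≤ t ∧ p.2 ≤ k - 2)

/-- Vertices of the `(k,t)`-tower. -/
def TowerVertex (k t : ℕ) : Type := {p : ℕ × ℕ // towerValid k t p}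

/-- One-directional adjacency of the tower: within a level `i ≥ 1` it is
`K_{k-1}` minus the edge `v_{i,0}v_{i,1}`; `v_{i-1,0}` is joined to `v_{i,j}`
for `j ≤ ⌊(k-2)/2⌋` and `v_{i-1,1}` to `v_{i,j}` for `⌈(k-1)/2⌉ = ⌊k/2⌋ ≤ j ≤ k-2`. -/
def towerAdjAux (k : ℕ) (p q : ℕ × ℕ) : Prop :=
  (p.1 = q.1 ∧ 1 ≤ p.1 ∧ p.2 ≠ q.2 ∧ ¬(p.2 ≤ 1 ∧ q.2 ≤ 1)) ∨
  (q.1 = p.1 + 1 ∧ ((p.2 = 0 ∧ q.2 ≤ (k - 2) / 2) ∨ (p.2 = 1 ∧ k / 2 ≤ q.2)))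

/-- The `(k,t)`-tower `T_{k,t}` as a simple graph. -/
def towerGraph (k t : ℕ) : SimpleGraph (TowerVertex k t) where
  Adj x y := towerAdjAux k x.1 y.1 ∨ towerAdjAux k y.1 x.1
  symm := ⟨fun x y h => Or.symm h⟩
  loopless := by
    constructor
    rintro ⟨⟨i, j⟩, hv⟩ h
    simp [towerAdjAux] at h

instance (k t : ℕ) : DecidableEq (TowerVertex k t) :=
  fun a b => decidable_of_iff (a.1 = b.1) Subtype.ext_iff.symm

abbrev towerMk (k t : ℕ) (p : ℕ × ℕ) (h : towerValid k t p) : TowerVertex k t := ⟨p, h⟩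

/-- The clique number of the `(k,t)`-tower equals `k-2`: there is a clique on
`k-2` vertices and every clique has at most `k-2` vertices. -/
theorem tower_cliqueNumber (k t : ℕ) (hk : 4 ≤ k) (ht : 1 ≤ t) :
    (∃ s : Finset (TowerVertex k t), (towerGraph k t).IsNClique (k - 2) s) ∧
    (∀ s : Finset (TowerVertex k t), (towerGraph k t).IsClique ↑s → s.card ≤ k - 2) := by
  constructor
  · -- existence of a (k-2)-clique: {(1,0)} ∪ {(1,j) : 2 ≤ j ≤ k-2}
    set J : Finset ℕ := insert 0 (Finset.Icc 2 (k - 2)) with hJdef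
    have hmemJ : ∀ j ∈ J, j ≤ k - 2 ∧ (j = 0 ∨ 2 ≤ j) := by
      intro j hj
      simp only [hJdef, Finset.mem_insert, Finset.mem_Icc] at hj
      omega
    refine ⟨J.attach.image (fun j =>
      towerMk k t (1, j.1) (by rw [towerValid]; exact Or.inr ⟨le_refl 1, ht, (hmemJ j.1 j.2).1⟩)), ?_, ?_⟩
    · intro u hu v hv hne
      simp only [Finset.coe_image, Set.mem_image, Finset.mem_coe, Finset.mem_attach] at hu hv
      obtain ⟨a, -, rfl⟩ := hu
      obtain ⟨b, -, rfl⟩ := hv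
      have hab : a.1 ≠ b.1 := by
        intro h
        exact hne (by simp [Subtype.ext_iff, Prod.ext_iff, h])
      have ha := (hmemJ a.1 a.2).2
      have hb := (hmemJ b.1 b.2).2
      exact Or.inl (Or.inl ⟨rfl, le_refl 1, hab,
        show ¬((a : ℕ) ≤ 1 ∧ (b : ℕ) ≤ 1) by omega⟩)
    · rw [Finset.card_image_of_injOn]
      · rw [Finset.card_attach]
        have h0 : (0 : ℕ) ∉ Finset.Icc 2 (k - 2) := by simp
        rw [hJdef, Finset.card_insert_of_notMem h0, Nat.card_Icc]
        omega
      · intro a _ b _ hab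
        exact Subtype.ext (by
          have : a.1 = b.1 := congrArg (fun x => x.1.2) hab
          exact this)
    -- upper bound
  · intro s hc
    rcases s.eq_empty_or_nonempty with rfl | hs
    · simp
    have hLne : (s.image (fun v => v.1.1)).Nonempty := hs.image _
    set m := (s.image (fun v => v.1.1)).min' hLne with hm
    have hm_le : ∀ v ∈ s, m ≤ v.1.1 := fun v hv =>
      Finset.min'_le _ _ (Finset.mem_image_of_mem _ hv)
    obtain ⟨w, hw, hwm⟩ : ∃ w ∈ s, w.1.1 = m := by
      have := Finset.min'_mem _ hLne
      rw [Finset.mem_image] at this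
      obtain ⟨w, hw, hwe⟩ := this
      exact ⟨w, hw, hwe⟩
    have hlev : ∀ v ∈ s, v.1.1 ≤ m + 1 := by
      intro v hv
      by_cases hvw : v = w
      · subst hvw; omega
      · have hadj := hc (Finset.mem_coe.2 hw) (Finset.mem_coe.2 hv) (Ne.symm hvw)
        have hmv := hm_le v hv
        rcases hadj with (⟨h1, -⟩ | ⟨h1, -⟩) | (⟨h1, -⟩ | ⟨h1, -⟩) <;> omega
    set g : TowerVertex k t → ℕ := fun v =>
      if v.1.1 = m then (if v.1.2 ≤ 1 then 0 else v.1.2 - 1)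
      else (if v.1.2 ≤ 1 then (k - 2) / 2 else v.1.2 - 1) with hg
    -- helper: a vertex at level m+1 in s is constrained by w
    have hcross : ∀ u ∈ s, u.1.1 = m + 1 →
        (w.1.2 = 0 ∧ u.1.2 ≤ (k - 2) / 2) ∨ (w.1.2 = 1 ∧ k / 2 ≤ u.1.2) := by
      intro u hu hum
      have hwu : w ≠ u := by intro h; rw [h] at hwm; omega
      have hadj := hc (Finset.mem_coe.2 hw) (Finset.mem_coe.2 hu) hwu
      rcases hadj with (⟨h1, -⟩ | ⟨h1, h2⟩) | (⟨h1, -⟩ | ⟨h1, -⟩)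
      · omega
      · exact h2
      · omega
      · omega
    have key : ∀ u ∈ s, ∀ v ∈ s, towerAdjAux k u.1 v.1 → g u ≠ g v := by
      intro u hu v hv hadj hgeq
      simp only [hg] at hgeq
      rcases hadj with ⟨h1, h2, h3, h4⟩ | ⟨h1, h5⟩
      · -- same level ≥ 1
        by_cases hum : u.1.1 = m
        · have hvm : v.1.1 = m := by omega
          rw [if_pos hum, if_pos hvm] at hgeq
          split_ifs at hgeq <;> omega
        · have hvm : v.1.1 ≠ m := by omega
          have hum1 : u.1.1 = m + 1 := by have := hm_le u hu; have := hlev u hu; omega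
          have hvm1 : v.1.1 = m + 1 := by omega
          have hcu := hcross u hu hum1
          have hcv := hcross v hv hvm1
          rw [if_neg hum, if_neg hvm] at hgeq
          split_ifs at hgeq <;> omega
      · -- cross level
        have hum : u.1.1 = m := by
          have := hm_le u hu; have := hlev v hv; omega
        have hvm : v.1.1 ≠ m := by omega
        have hu2 : u.1.2 ≤ 1 := by omega
        rw [if_pos hum, if_pos hu2, if_neg hvm] at hgeq
        split_ifs at hgeq <;> omega
    have hinj : Set.InjOn g ↑s := by
      intro u hu v hv hgeq
      by_contra hne
      rcases hc hu hv hne with h | h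
      · exact key u hu v hv h hgeq
      · exact key v hv u hu h hgeq.symm
    calc s.card = (s.image g).card := (Finset.card_image_of_injOn hinj).symm
      _ ≤ (Finset.range (k - 2)).card := by
          apply Finset.card_le_card
          intro x hx
          rw [Finset.mem_image] at hx
          obtain ⟨v, hv, rfl⟩ := hx
          rw [Finset.mem_range]
          have hval := v.2
          simp only [hg]
          rcases hval with ⟨h1, h2⟩ | ⟨h1, h2, h3⟩ <;> split_ifs <;> omega
      _ = k - 2 := Finset.card_range _
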